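/- For $a > 0$, $\beta \in \mathbb{R}$, the function $f(s) = \Phi\left(\frac{a + \beta s}{\sqrt{s}}\right) - e^{-2\beta a}\,\Phi\left(\frac{-a + \beta s}{\sqrt{s}}\right)$ is nonincreasing on $(0,\infty)$. -/

import Mathlib

open Real MeasureTheory

/-- The standard normal cumulative distribution function `Φ`. -/
noncomputable def stdNormalCDF (x : ℝ) : ℝ :=
  ∫ u in Set.Iic x, Real.exp (-u ^ 2 / 2) / Real.sqrt (2 * Real.pi)

noncomputable def stdNormalPDF (x : ℝ) : ℝ :=
  Real.exp (-x ^ 2 / 2) / Real.sqrt (2 * Real.pi)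

lemma stdNormalPDF_cont : Continuous stdNormalPDF := by
  unfold stdNormalPDF; fun_prop

lemma stdNormalPDF_pos (x : ℝ) : 0 < stdNormalPDF x := by
  unfold stdNormalPDF
  exact div_pos (Real.exp_pos _) (Real.sqrt_pos.2 (by positivity))

lemma stdNormalPDF_integrable : Integrable stdNormalPDF := by
  have h := integrable_exp_neg_mul_sq (by norm_num : (0:ℝ) < 1/2)
  have h2 : (fun x : ℝ => Real.exp (-(1/2) * x ^ 2)) = fun x : ℝ => Real.exp (-x ^ 2 / 2) := by
    ext x; ring_nf
  rw [h2] at h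
  exact h.div_const _

lemma stdNormalCDF_hasDerivAt (x : ℝ) : HasDerivAt stdNormalCDF (stdNormalPDF x) x := by
  have heq : stdNormalCDF = fun y => stdNormalCDF 0 + ∫ t in (0:ℝ)..y, stdNormalPDF t := by
    ext y
    have := intervalIntegral.integral_Iic_sub_Iic
      (stdNormalPDF_integrable.integrableOn (s := Set.Iic 0))
      (stdNormalPDF_integrable.integrableOn (s := Set.Iic y))
    simp only [stdNormalCDF, stdNormalPDF] at this ⊢
    linarith
  rw [heq]
  exact (intervalIntegral.integral_hasDerivAt_right
    (stdNormalPDF_cont.intervalIntegrable _ _)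
    stdNormalPDF_cont.aestronglyMeasurable.stronglyMeasurableAtFilter
    stdNormalPDF_cont.continuousAt).const_add _

/-- Derivative of the inner function `s ↦ (c + βs)/√s`. -/
lemma inner_hasDerivAt (c β s : ℝ) (hs : 0 < s) :
    HasDerivAt (fun s : ℝ => (c + β * s) / Real.sqrt s)
      ((β * Real.sqrt s - (c + β * s) * (1 / (2 * Real.sqrt s))) / (Real.sqrt s) ^ 2) s := by
  have h1 : HasDerivAt (fun s : ℝ => c + β * s) β s := by
    simpa using (hasDerivAt_id s).const_mul β |>.const_add c
  exact h1.div (Real.hasDerivAt_sqrt hs.ne') (Real.sqrt_ne_zero'.2 hs)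

theorem stmt_4 (a β : ℝ) (ha : 0 < a) :
    AntitoneOn
      (fun s : ℝ =>
        stdNormalCDF ((a + β * s) / Real.sqrt s) -
          Real.exp (-2 * β * a) * stdNormalCDF ((-a + β * s) / Real.sqrt s))
      (Set.Ioi 0) := by
  set f : ℝ → ℝ := fun s =>
    stdNormalCDF ((a + β * s) / Real.sqrt s) -
      Real.exp (-2 * β * a) * stdNormalCDF ((-a + β * s) / Real.sqrt s) with hf
  have key : ∀ s ∈ Set.Ioi (0:ℝ), ∃ D, HasDerivAt f D s ∧ D ≤ 0 := by
    intro s hs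
    rw [Set.mem_Ioi] at hs
    have hsq : 0 < Real.sqrt s := Real.sqrt_pos.2 hs
    have hsqs : Real.sqrt s ^ 2 = s := Real.sq_sqrt hs.le
    set A : ℝ := (a + β * s) / Real.sqrt s with hA
    set B : ℝ := (-a + β * s) / Real.sqrt s with hB
    set dA : ℝ := (β * Real.sqrt s - (a + β * s) * (1 / (2 * Real.sqrt s))) / (Real.sqrt s) ^ 2
    set dB : ℝ := (β * Real.sqrt s - (-a + β * s) * (1 / (2 * Real.sqrt s))) / (Real.sqrt s) ^ 2
    have h1 : HasDerivAt (fun s : ℝ => stdNormalCDF ((a + β * s) / Real.sqrt s))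
        (stdNormalPDF A * dA) s := by
      simp only [A, dA]; exact (stdNormalCDF_hasDerivAt _).comp s (inner_hasDerivAt a β s hs)
    have h2 : HasDerivAt (fun s : ℝ => stdNormalCDF ((-a + β * s) / Real.sqrt s))
        (stdNormalPDF B * dB) s := by
      simp only [B, dB]; exact (stdNormalCDF_hasDerivAt _).comp s (inner_hasDerivAt (-a) β s hs)
    refine ⟨_, h1.sub (h2.const_mul (Real.exp (-2 * β * a))), ?_⟩
    -- key identity: exp(-2βa) * φ(B) = φ(A)
    have hid : Real.exp (-2 * β * a) * stdNormalPDF B = stdNormalPDF A := by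
      unfold stdNormalPDF
      rw [← mul_div_assoc, ← Real.exp_add]
      congr 1
      rw [hA, hB, div_pow, div_pow, hsqs]
      field_simp
      ring
    have : stdNormalPDF A * dA - Real.exp (-2 * β * a) * (stdNormalPDF B * dB)
        = stdNormalPDF A * (dA - dB) := by
      rw [← mul_assoc, hid]; ring
    rw [this]
    have hdiff : dA - dB = -a / (Real.sqrt s * s) := by
      simp only [dA, dB, hsqs]
      field_simp
      ring
    rw [hdiff]
    have : -a / (Real.sqrt s * s) < 0 := div_neg_of_neg_of_pos (by linarith) (by positivity)
    exact le_of_lt (mul_neg_of_pos_of_neg (stdNormalPDF_pos A) this)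
  -- use derivative nonpositive on open convex set
  have hderiv : ∀ s ∈ Set.Ioi (0:ℝ), HasDerivAt f (deriv f s) s := by
    intro s hs
    obtain ⟨D, hD, _⟩ := key s hs
    rwa [hD.deriv]
  apply antitoneOn_of_deriv_nonpos (convex_Ioi 0)
  · intro s hs
    exact ((hderiv s hs).differentiableAt).continuousAt.continuousWithinAt
  · rw [interior_Ioi]
    intro s hs
    exact ((hderiv s hs).differentiableAt).differentiableWithinAt
  · rw [interior_Ioi]
    intro s hs
    obtain ⟨D, hD, hD0⟩ := key s hs
    rwa [hD.deriv]
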